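/- Let P : Ω → 𝒫 and F : Ω → ℱ be random variables on a finite probability space (Ω, ℙ), with 𝒫 and ℱ finite, and assume ℙ(P = p) > 0 for every p ∈ 𝒫. Then the predictive information is bounded by the statistical complexity: I[F; P] ≤ H[ε∘P]. -/
import Mathlib


open scoped BigOperators
attribute [local instance] Classical.propDecidable

/-- Probability of an event on a finite probability space given by a weight function. -/
noncomputable def prb {Ω : Type*} [Fintype Ω] (μ : Ω → ℝ) (E : Set Ω) : ℝ :=
  ∑ ω, if ω ∈ E then μ ω else 0

/-- The distribution of a random variable `X`. -/
noncomputable def pdist {Ω α : Type*} [Fintype Ω] (μ : Ω → ℝ) (X : Ω → α) (x : α) : ℝ :=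
  prb μ {ω | X ω = x}

/-- Shannon entropy `H[X]` (in nats; `Real.log 0 = 0` gives the convention `0·log 0 = 0`). -/
noncomputable def Hent {Ω α : Type*} [Fintype Ω] [Fintype α] (μ : Ω → ℝ) (X : Ω → α) : ℝ :=
  -∑ x, pdist μ X x * Real.log (pdist μ X x)

/-- Mutual information `I[X;Y] = H[X] + H[Y] - H[X,Y]`. -/
noncomputable def Iinfo {Ω α β : Type*} [Fintype Ω] [Fintype α] [Fintype β]
    (μ : Ω → ℝ) (X : Ω → α) (Y : Ω → β) : ℝ :=
  Hent μ X + Hent μ Y - Hent μ (fun ω => (X ω, Y ω))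

/-- Conditional entropy `H[X|Y] = H[X,Y] - H[Y]`. -/
noncomputable def condH {Ω α β : Type*} [Fintype Ω] [Fintype α] [Fintype β]
    (μ : Ω → ℝ) (X : Ω → α) (Y : Ω → β) : ℝ :=
  Hent μ (fun ω => (X ω, Y ω)) - Hent μ Y

/-- Conditional probability `ℙ(E | F)`. -/
noncomputable def cprob {Ω : Type*} [Fintype Ω] (μ : Ω → ℝ) (E F : Set Ω) : ℝ :=
  prb μ (E ∩ F) / prb μ F

/-- Causal equivalence of pasts: `p ∼ p'` iff they give the same conditional
distribution over futures. -/
def CausalEquiv {Ω Pst Fut : Type*} [Fintype Ω] (μ : Ω → ℝ)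
    (P : Ω → Pst) (F : Ω → Fut) (p p' : Pst) : Prop :=
  ∀ f : Fut, cprob μ {ω | F ω = f} {ω | P ω = p} = cprob μ {ω | F ω = f} {ω | P ω = p'}

/-- Causal equivalence as a setoid on the space of pasts. -/
def causalSetoid {Ω Pst Fut : Type*} [Fintype Ω] (μ : Ω → ℝ)
    (P : Ω → Pst) (F : Ω → Fut) : Setoid Pst where
  r := CausalEquiv μ P F
  iseqv := ⟨fun _ _ => rfl, fun h f => (h f).symm, fun h h' f => (h f).trans (h' f)⟩

/-- The causal state map `ε` sends a past to its causal equivalence class. -/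
def causalState {Ω Pst Fut : Type*} [Fintype Ω] (μ : Ω → ℝ)
    (P : Ω → Pst) (F : Ω → Fut) (p : Pst) : Quotient (causalSetoid μ P F) :=
  Quotient.mk (causalSetoid μ P F) p

section Aux
variable {Ω α β γ : Type*} [Fintype Ω] [Fintype α] [Fintype β] [Fintype γ]

lemma pdist_nonneg (μ : Ω → ℝ) (hμ0 : ∀ ω, 0 ≤ μ ω) (X : Ω → α) (x : α) :
    0 ≤ pdist μ X x := by
  refine Finset.sum_nonneg fun ω _ => ?_
  split <;> simp [hμ0 ω]

lemma pdist_comp (μ : Ω → ℝ) (X : Ω → α) (t : α → γ) (c : γ) :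
    pdist μ (fun ω => t (X ω)) c = ∑ a, if t a = c then pdist μ X a else 0 := by
  unfold pdist prb
  have h : ∀ a, (if t a = c then (∑ ω, if ω ∈ {ω | X ω = a} then μ ω else 0) else 0)
      = ∑ ω, if X ω = a ∧ t a = c then μ ω else 0 := by
    intro a
    split
    · next h => exact Finset.sum_congr rfl fun ω _ => by simp [Set.mem_setOf_eq, h]
    · next h => rw [Finset.sum_eq_zero]; intro ω _; simp [h]
  rw [Finset.sum_congr rfl fun a _ => h a, Finset.sum_comm]
  refine Finset.sum_congr rfl fun ω _ => ?_
  simp only [Set.mem_setOf_eq]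
  by_cases hc : t (X ω) = c
  · rw [if_pos hc, Finset.sum_eq_single (X ω)]
    · simp [hc]
    · intro b _ hb; exact if_neg fun h => hb h.1.symm
    · simp
  · rw [if_neg hc, Finset.sum_eq_zero]
    intro b _
    by_cases hXb : X ω = b
    · simp [← hXb, hc]
    · simp [hXb]

lemma pdist_fst (μ : Ω → ℝ) (X : Ω → α) (Y : Ω → β) (x : α) :
    pdist μ X x = ∑ y, pdist μ (fun ω => (X ω, Y ω)) (x, y) := by
  unfold pdist prb
  rw [Finset.sum_comm]
  refine Finset.sum_congr rfl fun ω _ => ?_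
  simp only [Set.mem_setOf_eq, Prod.mk.injEq]
  by_cases hx : X ω = x
  · rw [if_pos hx, Finset.sum_eq_single (Y ω)]
    · simp [hx]
    · intro b _ hb; exact if_neg fun h => hb h.2.symm
    · simp
  · rw [if_neg hx, Finset.sum_eq_zero]; intro y _; simp [hx]

lemma pdist_snd (μ : Ω → ℝ) (X : Ω → α) (Y : Ω → β) (y : β) :
    pdist μ Y y = ∑ x, pdist μ (fun ω => (X ω, Y ω)) (x, y) := by
  unfold pdist prb
  rw [Finset.sum_comm]
  refine Finset.sum_congr rfl fun ω _ => ?_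
  simp only [Set.mem_setOf_eq, Prod.mk.injEq]
  by_cases hy : Y ω = y
  · rw [if_pos hy, Finset.sum_eq_single (X ω)]
    · simp [hy]
    · intro b _ hb; exact if_neg fun h => hb h.1.symm
    · simp
  · rw [if_neg hy, Finset.sum_eq_zero]; intro x _; simp [hy]

lemma Hent_le_Hent_pair (μ : Ω → ℝ) (hμ0 : ∀ ω, 0 ≤ μ ω) (X : Ω → α) (Y : Ω → β) :
    Hent μ X ≤ Hent μ (fun ω => (X ω, Y ω)) := by
  unfold Hent
  rw [neg_le_neg_iff, Fintype.sum_prod_type]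
  refine Finset.sum_le_sum fun x _ => ?_
  rw [pdist_fst μ X Y x, Finset.sum_mul]
  refine Finset.sum_le_sum fun y _ => ?_
  set d := pdist μ (fun ω => (X ω, Y ω)) with hd
  by_cases h0 : d (x, y) = 0
  · simp [h0]
  · have hpos : 0 < d (x, y) := lt_of_le_of_ne (pdist_nonneg μ hμ0 _ _) (Ne.symm h0)
    have hle : d (x, y) ≤ ∑ y', d (x, y') :=
      Finset.single_le_sum (fun y' _ => pdist_nonneg μ hμ0 _ _) (Finset.mem_univ y)
    exact mul_le_mul_of_nonneg_left (Real.log_le_log hpos hle) hpos.le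

lemma sum_fiber (t : β → γ) (m : β → ℝ) (g : γ → ℝ) :
    ∑ c, g c * ∑ b, (if t b = c then m b else 0) = ∑ b, g (t b) * m b := by
  have h : ∀ c, g c * ∑ b, (if t b = c then m b else 0)
      = ∑ b, if t b = c then g (t b) * m b else 0 := by
    intro c
    rw [Finset.mul_sum]
    refine Finset.sum_congr rfl fun b _ => ?_
    by_cases h : t b = c <;> simp [h]
  rw [Finset.sum_congr rfl fun c _ => h c, Finset.sum_comm]
  refine Finset.sum_congr rfl fun b _ => ?_
  rw [Finset.sum_eq_single (t b)]
  · simp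
  · intro c _ hc; exact if_neg fun h => hc h.symm
  · simp

lemma condH_eq (μ : Ω → ℝ) (X : Ω → α) (Y : Ω → β) (t : β → γ) (r : α → γ → ℝ)
    (hd : ∀ a b, pdist μ (fun ω => (X ω, Y ω)) (a, b) = r a (t b) * pdist μ Y b) :
    condH μ X Y = -∑ a, ∑ b, r a (t b) * pdist μ Y b * Real.log (r a (t b)) := by
  unfold condH Hent
  rw [Fintype.sum_prod_type]
  have key : ∀ a b, pdist μ (fun ω => (X ω, Y ω)) (a, b)
        * Real.log (pdist μ (fun ω => (X ω, Y ω)) (a, b))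
      = r a (t b) * pdist μ Y b * Real.log (r a (t b))
        + pdist μ (fun ω => (X ω, Y ω)) (a, b) * Real.log (pdist μ Y b) := by
    intro a b
    by_cases hm : pdist μ Y b = 0
    · simp [hd a b, hm]
    · by_cases hr : r a (t b) = 0
      · simp [hd a b, hr]
      · rw [hd a b, Real.log_mul hr hm]; ring
  have h2 : (∑ a, ∑ b, pdist μ (fun ω => (X ω, Y ω)) (a, b)
        * Real.log (pdist μ Y b)) = ∑ b, pdist μ Y b * Real.log (pdist μ Y b) := by
    rw [Finset.sum_comm]
    refine Finset.sum_congr rfl fun b _ => ?_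
    rw [← Finset.sum_mul, ← pdist_snd μ X Y b]
  have hsum : (∑ a, ∑ b, pdist μ (fun ω => (X ω, Y ω)) (a, b)
        * Real.log (pdist μ (fun ω => (X ω, Y ω)) (a, b)))
      = (∑ a, ∑ b, r a (t b) * pdist μ Y b * Real.log (r a (t b)))
        + ∑ b, pdist μ Y b * Real.log (pdist μ Y b) := by
    rw [← h2, ← Finset.sum_add_distrib]
    refine Finset.sum_congr rfl fun a _ => ?_
    rw [← Finset.sum_add_distrib]
    exact Finset.sum_congr rfl fun b _ => key a b
  rw [hsum]; ring

end Aux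

/-- the predictive information is bounded by the statistical complexity:
`I[F; P] ≤ H[ε∘P]`. -/
theorem predictive_info_le_statistical_complexity {Ω Pst Fut : Type*}
    [Fintype Ω] [Fintype Pst] [Fintype Fut]
    (μ : Ω → ℝ) (hμ0 : ∀ ω, 0 ≤ μ ω) (hμ1 : ∑ ω, μ ω = 1)
    (P : Ω → Pst) (F : Ω → Fut)
    (hP : ∀ p : Pst, 0 < prb μ {ω | P ω = p}) :
    Iinfo μ F P ≤ Hent μ (fun ω => causalState μ P F (P ω)) := by
  set t : Pst → Quotient (causalSetoid μ P F) := causalState μ P F with ht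
  set r : Fut → Quotient (causalSetoid μ P F) → ℝ :=
    fun f => Quotient.lift (fun p => cprob μ {ω | F ω = f} {ω | P ω = p})
      (fun p p' h => h f) with hr
  have hd : ∀ f p, pdist μ (fun ω => (F ω, P ω)) (f, p) = r f (t p) * pdist μ P p := by
    intro f p
    have h1 : pdist μ (fun ω => (F ω, P ω)) (f, p)
        = prb μ ({ω | F ω = f} ∩ {ω | P ω = p}) := by
      unfold pdist
      congr 1
      ext ω
      simp [Prod.ext_iff, Set.mem_setOf_eq]
    have h2 : r f (t p) = cprob μ {ω | F ω = f} {ω | P ω = p} := rfl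
    rw [h1, h2]
    unfold cprob pdist
    exact (div_mul_cancel₀ _ (hP p).ne').symm
  -- joint of (F, t∘P)
  have hs := pdist_comp μ P t
  have he : ∀ f c, pdist μ (fun ω => (F ω, t (P ω))) (f, c)
      = r f c * pdist μ (fun ω => t (P ω)) c := by
    intro f c
    have := pdist_comp μ (fun ω => (F ω, P ω)) (fun q => (q.1, t q.2)) (f, c)
    have heq : (fun ω => (F ω, t (P ω)))
        = fun ω => ((fun q : Fut × Pst => (q.1, t q.2)) ((F ω, P ω))) := rfl
    rw [heq, this, Fintype.sum_prod_type, hs c, Finset.mul_sum]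
    rw [Finset.sum_comm]
    refine Finset.sum_congr rfl fun p _ => ?_
    rw [Finset.sum_eq_single f]
    · simp only [Prod.mk.injEq]
      by_cases hc : t p = c
      · simp [hc, hd f p]
      · simp [hc]
    · intro b _ hb
      exact if_neg fun h => hb (congrArg Prod.fst h)
    · simp
  have hcond : condH μ F P = condH μ F (fun ω => t (P ω)) := by
    rw [condH_eq μ F P t r hd, condH_eq μ F (fun ω => t (P ω)) id r (fun a c => he a c)]
    congr 1
    refine Finset.sum_congr rfl fun f _ => ?_
    simp only [id]
    have key := sum_fiber t (fun p => pdist μ P p) (fun c => r f c * Real.log (r f c))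
    simp only [← hs] at key
    calc ∑ b, r f (t b) * pdist μ P b * Real.log (r f (t b))
        = ∑ b, r f (t b) * Real.log (r f (t b)) * pdist μ P b :=
          Finset.sum_congr rfl fun b _ => by ring
      _ = ∑ c, r f c * Real.log (r f c) * pdist μ (fun ω => t (P ω)) c := key.symm
      _ = ∑ c, r f c * pdist μ (fun ω => t (P ω)) c * Real.log (r f c) :=
          Finset.sum_congr rfl fun c _ => by ring
  have hle : Hent μ F ≤ Hent μ (fun ω => (F ω, t (P ω))) := Hent_le_Hent_pair μ hμ0 F _
  unfold Iinfo
  unfold condH at hcond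
  linarith
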